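/- Let 0 < δ ≤ 1, let ρ be a real with q := 1 - F_H(ρ) ∈ (0,1], let C ≥ 0, and let n₀ = 1 + C·log(2/δ)/q and n ≥ n₀ be an integer with n ≥ 2. Suppose each of n-1 bidders independently both (a) participates in at least one of the first τ = ⌈(n₀-1)/((n-1)α)⌉ rounds with probability at least 1-(1-α)^τ (α ∈ (0,1]) and (b) has valuation exceeding ρ with probability q. Then the probability that no bidder both participates among the first τ rounds and has valuation exceeding ρ is at most (δ/2)^{C/1.59}. -/

import Mathlib

open MeasureTheory ProbabilityTheory

lemma aux_one_sub_exp (t : ℝ) (h0 : 0 ≤ t) (h1 : t ≤ 1) :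
    t / 1.59 ≤ 1 - Real.exp (-t) := by
  have hc := convexOn_exp.2 (Set.mem_univ (0:ℝ)) (Set.mem_univ (-1:ℝ))
    (by linarith : (0:ℝ) ≤ 1 - t) h0 (by ring)
  simp only [smul_eq_mul, mul_zero, mul_neg, mul_one, zero_add, Real.exp_zero] at hc
  have he : Real.exp (-1) ≤ 59 / 159 := by
    rw [Real.exp_neg, inv_le_comm₀ (Real.exp_pos 1) (by norm_num)]
    calc ((59:ℝ) / 159)⁻¹ ≤ 2.7 := by norm_num
    _ ≤ Real.exp 1 := by linarith [Real.exp_one_gt_d9]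
  have h2 : t * Real.exp (-1) ≤ t * (59/159) := mul_le_mul_of_nonneg_left he h0
  have h3 : t / 1.59 = t * (100/159) := by norm_num; ring
  rw [h3]; linarith

theorem no_high_bidder_prob_le {Ω : Type*} [MeasurableSpace Ω]
    (μ : Measure Ω) [IsProbabilityMeasure μ]
    (δ q C α n₀ : ℝ) (n : ℕ)
    (hδ0 : 0 < δ) (hδ1 : δ ≤ 1) (hq0 : 0 < q) (hq1 : q ≤ 1) (hC : 0 ≤ C)
    (hn₀ : n₀ = 1 + C * Real.log (2 / δ) / q)
    (hn : n₀ ≤ (n : ℝ)) (hn2 : 2 ≤ n)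
    (hα0 : 0 < α) (hα1 : α ≤ 1)
    (τ : ℕ) (hτ : τ = ⌈(n₀ - 1) / (((n : ℝ) - 1) * α)⌉₊)
    -- `E j` : the event that bidder `j ≠ i` both participates in one of the
    -- first `τ` rounds and has valuation exceeding `ρ`.
    (E : Fin (n - 1) → Set Ω) (hEm : ∀ j, MeasurableSet (E j))
    (hind : iIndepSet E μ)
    (hp : ∀ j, ENNReal.ofReal ((1 - (1 - α) ^ τ) * q) ≤ μ (E j)) :
    μ (⋂ j, (E j)ᶜ) ≤ ENNReal.ofReal ((δ / 2) ^ (C / 1.59)) := by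
  set L : ℝ := Real.log (2 / δ) with hL
  have hL0 : 0 ≤ L := Real.log_nonneg (by rw [le_div_iff₀ hδ0]; linarith)
  have hn₀1 : 1 ≤ n₀ := by
    rw [hn₀]
    have : 0 ≤ C * L / q := by positivity
    linarith
  have hn1 : (1:ℝ) ≤ (n:ℝ) - 1 := by
    have : (2:ℝ) ≤ (n:ℝ) := by exact_mod_cast hn2
    linarith
  set t : ℝ := (n₀ - 1) / ((n:ℝ) - 1) with ht
  have ht0 : 0 ≤ t := by apply div_nonneg <;> linarith
  have ht1 : t ≤ 1 := by
    rw [div_le_one (by linarith)]; linarith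
  -- (1-α)^τ ≤ exp (-t)
  set p : ℝ := (1 - (1 - α) ^ τ) * q with hpdef
  have hτge : (n₀ - 1) / (((n:ℝ) - 1) * α) ≤ (τ : ℝ) := hτ ▸ Nat.le_ceil _
  have hpow : (1 - α) ^ τ ≤ Real.exp (-t) := by
    have h1a : (1 - α) ^ τ ≤ Real.exp (-α) ^ τ :=
      pow_le_pow_left₀ (by linarith) (by linarith [Real.add_one_le_exp (-α)]) τ
    have h2a : Real.exp (-α) ^ τ = Real.exp (-(α * τ)) := by
      rw [← Real.exp_nat_mul]; ring_nf
    have h3a : t ≤ α * τ := by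
      have := mul_le_mul_of_nonneg_left hτge (le_of_lt hα0)
      calc t = α * ((n₀ - 1) / (((n:ℝ) - 1) * α)) := by
              rw [ht]; field_simp
        _ ≤ α * τ := this
    calc (1 - α) ^ τ ≤ Real.exp (-(α * τ)) := h2a ▸ h1a
      _ ≤ Real.exp (-t) := Real.exp_le_exp.2 (by linarith)
  have hkey : t / 1.59 ≤ 1 - (1 - α) ^ τ := by
    have := aux_one_sub_exp t ht0 ht1
    linarith
  have hτnn : 0 ≤ (1 - α) ^ τ := pow_nonneg (by linarith) τ
  have hp0 : 0 ≤ p := by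
    apply mul_nonneg _ (le_of_lt hq0)
    have h0 : (0:ℝ) ≤ t / 1.59 := by positivity
    linarith
  have hp1 : p ≤ 1 := by
    have h1 : 1 - (1 - α) ^ τ ≤ 1 := by linarith
    calc p ≤ 1 * q := mul_le_mul_of_nonneg_right h1 (le_of_lt hq0)
      _ ≤ 1 := by linarith
  -- (n-1) * p ≥ C * L / 1.59
  have hnefrac : ((n:ℝ) - 1) ≠ 0 := by linarith
  have hnp : C * L / 1.59 ≤ ((n:ℝ) - 1) * p := by
    have h1 : ((n:ℝ) - 1) * (t / 1.59) ≤ ((n:ℝ) - 1) * (1 - (1 - α) ^ τ) :=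
      mul_le_mul_of_nonneg_left hkey (by linarith)
    have h1' : ((n:ℝ) - 1) * (t / 1.59) * q ≤ ((n:ℝ) - 1) * p := by
      rw [hpdef, show ((n:ℝ) - 1) * ((1 - (1 - α) ^ τ) * q)
        = ((n:ℝ) - 1) * (1 - (1 - α) ^ τ) * q by ring]
      exact mul_le_mul_of_nonneg_right h1 (le_of_lt hq0)
    have h2 : ((n:ℝ) - 1) * (t / 1.59) * q = (n₀ - 1) * q / 1.59 := by
      rw [ht]
      field_simp
    have h3 : (n₀ - 1) * q = C * L := by
      rw [hn₀]
      field_simp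
      ring
    rw [h2] at h1'
    rw [h3] at h1'
    exact h1'
  -- measure computation
  have hmeas : μ (⋂ j, (E j)ᶜ) = ∏ j, μ (E j)ᶜ :=
    ((iIndepSet_iff_iIndep E μ).1 hind).meas_iInter
      (fun _ => (MeasurableSpace.measurableSet_generateFrom (Set.mem_singleton _)).compl)
  have hcompl : ∀ j, μ (E j)ᶜ ≤ ENNReal.ofReal (1 - p) := by
    intro j
    have h1 : μ (E j)ᶜ = 1 - μ (E j) := by
      rw [measure_compl (hEm j) (measure_ne_top μ _), measure_univ]
    rw [h1]
    have h2 : ENNReal.ofReal (1 - p) = 1 - ENNReal.ofReal p := by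
      rw [ENNReal.ofReal_sub _ hp0, ENNReal.ofReal_one]
    rw [h2]
    exact tsub_le_tsub_left (hp j) 1
  have hprod : μ (⋂ j, (E j)ᶜ) ≤ ENNReal.ofReal ((1 - p) ^ (n - 1)) := by
    rw [hmeas, ENNReal.ofReal_pow (by linarith : (0:ℝ) ≤ 1 - p)]
    calc ∏ j, μ (E j)ᶜ ≤ ∏ _j : Fin (n-1), ENNReal.ofReal (1 - p) :=
          Finset.prod_le_prod' (fun j _ => hcompl j)
      _ = ENNReal.ofReal (1 - p) ^ (n - 1) := by
          rw [Finset.prod_const, Finset.card_univ, Fintype.card_fin]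
  refine hprod.trans (ENNReal.ofReal_le_ofReal ?_)
  -- real inequality: (1-p)^(n-1) ≤ (δ/2)^(C/1.59)
  have hcast : ((n - 1 : ℕ) : ℝ) = (n:ℝ) - 1 := by
    have := Nat.cast_sub (le_of_lt (lt_of_lt_of_le one_lt_two hn2)) (R := ℝ) (m := 1) (n := n)
    simpa using this
  have hstep1 : (1 - p) ^ (n - 1) ≤ Real.exp (-(((n:ℝ) - 1) * p)) := by
    calc (1 - p) ^ (n - 1) ≤ Real.exp (-p) ^ (n - 1) :=
          pow_le_pow_left₀ (by linarith) (by linarith [Real.add_one_le_exp (-p)]) _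
      _ = Real.exp (((n - 1 : ℕ) : ℝ) * (-p)) := by rw [← Real.exp_nat_mul]
      _ = Real.exp (-(((n:ℝ) - 1) * p)) := by rw [hcast]; ring_nf
  have hstep2 : Real.exp (-(((n:ℝ) - 1) * p)) ≤ Real.exp (-(C * L / 1.59)) :=
    Real.exp_le_exp.2 (by linarith)
  have hstep3 : Real.exp (-(C * L / 1.59)) = (δ / 2) ^ (C / 1.59) := by
    rw [Real.rpow_def_of_pos (by linarith : (0:ℝ) < δ / 2)]
    congr 1
    have : Real.log (δ / 2) = -L := by
      rw [hL, ← Real.log_inv]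
      congr 1
      field_simp
    rw [this]; ring
  linarith [hstep1, hstep2, hstep3.ge, hstep3.le]
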